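/- Let G be a graph with at least one edge and let 0 < η ≤ 1. Then for every partition ℬ of V(G) there exists an η-fat partition 𝒜 of V(G), each of whose parts is a union of parts of ℬ, such that q_𝒜(G) > q_ℬ(G) − 2η. In particular, there exists an η-fat partition 𝒜 of V(G) with q_𝒜(G) > q*(G) − 2η. -/

import Mathlib

open Finset
open scoped Classical

/-- The number of edges of a finite graph. -/
noncomputable def edgeCount {V : Type} [Fintype V] [DecidableEq V] (G : SimpleGraph V) : ℕ :=
  G.edgeFinset.card

/-- vol(A): the sum over vertices of A of their degree in G. -/
noncomputable def degSum {V : Type} [Fintype V] [DecidableEq V] (G : SimpleGraph V)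
    (A : Finset V) : ℕ :=
  ∑ v ∈ A, G.degree v

/-- e(A): the number of edges of G with both endpoints in A. -/
noncomputable def intEdges {V : Type} [Fintype V] [DecidableEq V] (G : SimpleGraph V)
    (A : Finset V) : ℕ :=
  (G.edgeFinset.filter (fun e => ∀ v ∈ e, v ∈ A)).card

/-- The modularity score q_𝒜(G) of a vertex partition 𝒜 of G; it is 0 if G has no edges. -/
noncomputable def modScore {V : Type} [Fintype V] [DecidableEq V] (G : SimpleGraph V)
    (P : Finpartition (univ : Finset V)) : ℝ :=
  if edgeCount G = 0 then 0 else
    (∑ A ∈ P.parts, (intEdges G A : ℝ)) / (edgeCount G : ℝ)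
      - (∑ A ∈ P.parts, (degSum G A : ℝ) ^ 2) / (4 * (edgeCount G : ℝ) ^ 2)

/-- The modularity q*(G) of a graph: the maximum of q_𝒜(G) over all vertex partitions 𝒜. -/
noncomputable def modularity {V : Type} [Fintype V] [DecidableEq V] (G : SimpleGraph V) : ℝ :=
  ⨆ P : Finpartition (univ : Finset V), modScore G P

/-- The probability that the random subgraph G_p of G (each edge of G retained
independently with probability p) satisfies the predicate Q. -/
noncomputable def subgraphProb {V : Type} [Fintype V] [DecidableEq V] (G : SimpleGraph V)
    (p : ℝ) (Q : SimpleGraph V → Prop) : ℝ :=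
  ∑ F ∈ G.edgeFinset.powerset,
    if Q (SimpleGraph.fromEdgeSet (F : Set (Sym2 V))) then
      p ^ F.card * (1 - p) ^ (G.edgeFinset.card - F.card)
    else 0

/-- The fattening lemma: for a graph G with at least one edge and 0 < η ≤ 1,
every partition ℬ of V(G) can be coarsened (each part of the new partition is a
union of parts of ℬ, i.e. ℬ refines it) into an η-fat partition 𝒜 (each part has
volume at least η·vol(G), where vol(G) = 2·e(G)) with q_𝒜(G) > q_ℬ(G) − 2η.
In particular there is an η-fat partition 𝒜 with q_𝒜(G) > q*(G) − 2η. -/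

private lemma claimY {α : Type} [DecidableEq α] (P : Finset α) :
    ∀ (w : α → ℝ) (t d : ℝ), (∀ p ∈ P, 0 ≤ w p) → 0 < t → 0 ≤ d →
    (∑ p ∈ P, w p = 2 * t + d) →
    (∀ T ⊆ P, (∑ p ∈ T, w p) < t ∨ t + d < ∑ p ∈ T, w p) →
    d * (2 * t + d) < ∑ p ∈ P, (w p) ^ 2 := by
  induction P using Finset.strongInduction with
  | _ P ih =>
    intro w t d hw ht hd hsum hwin
    by_cases hx : ∃ x ∈ P, 0 < w x ∧ w x ≤ d
    · obtain ⟨x, hxP, hx0, hxd⟩ := hx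
      have hxt : w x < t := by
        rcases hwin {x} (by simpa using hxP) with h | h
        · simpa using h
        · simp only [sum_singleton] at h; linarith
      have herase : P.erase x ⊂ P := erase_ssubset hxP
      have hsplit : ∑ p ∈ P.erase x, w p + w x = ∑ p ∈ P, w p :=
        Finset.sum_erase_add P w hxP
      have hsum' : ∑ p ∈ P.erase x, w p = 2 * (t - w x) + (d + w x) := by linarith
      have hwin' : ∀ T ⊆ P.erase x,
          (∑ p ∈ T, w p) < t - w x ∨ (t - w x) + (d + w x) < ∑ p ∈ T, w p := by
        intro T hT
        have hTP : T ⊆ P := hT.trans (erase_subset _ _)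
        have h1 := hwin T hTP
        have hxT : x ∉ T := fun h => (Finset.mem_erase.1 (hT h)).1 rfl
        have h2 := hwin (insert x T) (by
          intro y hy
          rcases Finset.mem_insert.1 hy with rfl | hy
          · exact hxP
          · exact hTP hy)
        rw [Finset.sum_insert hxT] at h2
        rcases h2 with h2 | h2
        · left; linarith
        · rcases h1 with h1 | h1
          · exfalso; linarith
          · right; linarith
      have ihx := ih _ herase w (t - w x) (d + w x)
        (fun p hp => hw p (erase_subset _ _ hp)) (by linarith) (by linarith) hsum' hwin'
      have hsplit2 : ∑ p ∈ P.erase x, (w p) ^ 2 + (w x) ^ 2 = ∑ p ∈ P, (w p) ^ 2 :=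
        Finset.sum_erase_add P _ hxP
      nlinarith
    · push_neg at hx
      have hpos : ∃ x ∈ P, 0 < w x := by
        by_contra hall
        push_neg at hall
        have : ∑ p ∈ P, w p ≤ 0 := Finset.sum_nonpos hall
        nlinarith
      obtain ⟨x, hxP, hx0⟩ := hpos
      have hterm : ∀ p ∈ P, d * w p ≤ (w p) ^ 2 := by
        intro p hp
        rcases eq_or_lt_of_le (hw p hp) with h | h
        · rw [← h]; ring_nf; simp
        · have hdp : d < w p := hx p hp h
          nlinarith
      have hxterm : d * w x < (w x) ^ 2 := by
        have := hx x hxP hx0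
        nlinarith
      calc d * (2 * t + d) = d * ∑ p ∈ P, w p := by rw [hsum]
        _ = ∑ p ∈ P, d * w p := Finset.mul_sum _ _ _
        _ < ∑ p ∈ P, (w p) ^ 2 := Finset.sum_lt_sum hterm ⟨x, hxP, hxterm⟩

private lemma grouping {α : Type} [DecidableEq α] (P : Finset α) :
    ∀ (w : α → ℝ) (t : ℝ), (∀ p ∈ P, 0 ≤ w p) → 0 < t → t ≤ ∑ p ∈ P, w p →
    ∃ Q : Finpartition P,
      (∀ g ∈ Q.parts, t ≤ ∑ p ∈ g, w p) ∧
      (∑ g ∈ Q.parts, (∑ p ∈ g, w p) ^ 2) < 2 * t * (∑ p ∈ P, w p) + ∑ p ∈ P, (w p) ^ 2 := by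
  induction P using Finset.strongInduction with
  | _ P ih =>
    intro w t hw ht htv
    by_cases hsplit : ∃ S ⊆ P, t ≤ ∑ p ∈ S, w p ∧ ∑ p ∈ S, w p ≤ (∑ p ∈ P, w p) - t
    · obtain ⟨S, hSP, hSt, hSv⟩ := hsplit
      have hsd : ∑ p ∈ P \ S, w p + ∑ p ∈ S, w p = ∑ p ∈ P, w p := Finset.sum_sdiff hSP
      have hsd2 : ∑ p ∈ P \ S, (w p) ^ 2 + ∑ p ∈ S, (w p) ^ 2 = ∑ p ∈ P, (w p) ^ 2 :=
        Finset.sum_sdiff hSP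
      have hSc : t ≤ ∑ p ∈ P \ S, w p := by linarith
      have hSne : S.Nonempty := by
        rcases S.eq_empty_or_nonempty with rfl | h
        · simp at hSt; linarith
        · exact h
      have hScne : (P \ S).Nonempty := by
        rcases (P \ S).eq_empty_or_nonempty with he | h
        · rw [he] at hsd; simp at hsd; linarith
        · exact h
      have hS1 : S ⊂ P := by
        refine Finset.ssubset_iff_subset_ne.2 ⟨hSP, ?_⟩
        rintro rfl
        obtain ⟨x, hx⟩ := hScne
        exact (Finset.mem_sdiff.1 hx).2 (Finset.mem_sdiff.1 hx).1
      have hS2 : P \ S ⊂ P := by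
        refine Finset.ssubset_iff_subset_ne.2 ⟨Finset.sdiff_subset, ?_⟩
        intro he
        obtain ⟨x, hx⟩ := hSne
        have hxP : x ∈ P := hSP hx
        rw [← he] at hxP
        exact (Finset.mem_sdiff.1 hxP).2 hx
      obtain ⟨Q1, hQ1f, hQ1b⟩ := ih S hS1 w t (fun p hp => hw p (hSP hp)) ht hSt
      obtain ⟨Q2, hQ2f, hQ2b⟩ := ih (P \ S) hS2 w t
        (fun p hp => hw p (Finset.sdiff_subset hp)) ht hSc
      have hdisjparts : Disjoint Q1.parts Q2.parts := by
        rw [Finset.disjoint_left]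
        intro g hg1 hg2
        obtain ⟨x, hx⟩ := Q1.nonempty_of_mem_parts hg1
        exact (Finset.mem_sdiff.1 (Q2.le hg2 hx)).2 (Q1.le hg1 hx)
      refine ⟨⟨Q1.parts ∪ Q2.parts, ?_, ?_, ?_⟩, ?_, ?_⟩
      · rw [Finset.supIndep_iff_pairwiseDisjoint]
        intro g hg h hh hgh
        simp only [Finset.coe_union, Set.mem_union, mem_coe] at hg hh
        have cross : ∀ g' h' : Finset α, g' ∈ Q1.parts → h' ∈ Q2.parts →
            Disjoint (id g') (id h') := by
          intro g' h' hg' hh'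
          rw [Finset.disjoint_left]
          intro x hxg hxh
          exact (Finset.mem_sdiff.1 (Q2.le hh' hxh)).2 (Q1.le hg' hxg)
        rcases hg with hg | hg <;> rcases hh with hh | hh
        · exact Q1.disjoint hg hh hgh
        · exact cross g h hg hh
        · exact (cross h g hh hg).symm
        · exact Q2.disjoint hg hh hgh
      · rw [Finset.sup_union, Q1.sup_parts, Q2.sup_parts]
        rw [Finset.sup_eq_union]
        exact Finset.union_sdiff_of_subset hSP
      · rw [Finset.mem_union]
        rintro (h | h)
        · exact Q1.bot_notMem h
        · exact Q2.bot_notMem h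
      · intro g hg
        rcases Finset.mem_union.1 hg with h | h
        · exact hQ1f g h
        · exact hQ2f g h
      · rw [Finset.sum_union hdisjparts]
        nlinarith
    · push_neg at hsplit
      have hv0 : 0 < ∑ p ∈ P, w p := lt_of_lt_of_le ht htv
      have hPne : P ≠ (⊥ : Finset α) := by
        rintro rfl
        simp at hv0
      refine ⟨Finpartition.indiscrete hPne, ?_, ?_⟩
      · intro g hg
        rw [Finpartition.indiscrete_parts, Finset.mem_singleton] at hg
        subst hg; exact htv
      · rw [Finpartition.indiscrete_parts, Finset.sum_singleton]
        rcases lt_or_ge (∑ p ∈ P, w p) (2 * t) with hv | hv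
        · have h2 : 0 ≤ ∑ p ∈ P, (w p) ^ 2 := Finset.sum_nonneg fun p _ => sq_nonneg _
          nlinarith
        · have hY := claimY P w t ((∑ p ∈ P, w p) - 2 * t) hw ht (by linarith) (by ring)
            (by
              intro T hT
              rcases lt_or_ge (∑ p ∈ T, w p) t with h | h
              · exact Or.inl h
              · exact Or.inr (by linarith [hsplit T hT h]))
          nlinarith

theorem statement5 (V : Type) [Fintype V] [DecidableEq V] (G : SimpleGraph V)
    (hG : 0 < edgeCount G) (η : ℝ) (hη0 : 0 < η) (hη1 : η ≤ 1) :
    (∀ B : Finpartition (univ : Finset V),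
      ∃ A : Finpartition (univ : Finset V), B ≤ A ∧
        (∀ s ∈ A.parts, η * (2 * (edgeCount G : ℝ)) ≤ (degSum G s : ℝ)) ∧
        modScore G B - 2 * η < modScore G A) ∧
    (∃ A : Finpartition (univ : Finset V),
      (∀ s ∈ A.parts, η * (2 * (edgeCount G : ℝ)) ≤ (degSum G s : ℝ)) ∧
      modularity G - 2 * η < modScore G A) := by
  have hm0 : (0:ℝ) < (edgeCount G : ℝ) := by exact_mod_cast hG
  have hmne : edgeCount G ≠ 0 := Nat.pos_iff_ne_zero.mp hG
  have main : ∀ B : Finpartition (univ : Finset V),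
      ∃ A : Finpartition (univ : Finset V), B ≤ A ∧
        (∀ s ∈ A.parts, η * (2 * (edgeCount G : ℝ)) ≤ (degSum G s : ℝ)) ∧
        modScore G B - 2 * η < modScore G A := by
    intro B
    set m : ℝ := (edgeCount G : ℝ) with hmdef
    -- handshake
    have hhandN : ∑ b ∈ B.parts, degSum G b = 2 * edgeCount G := by
      have h1 : ∑ b ∈ B.parts, degSum G b = ∑ v ∈ (univ : Finset V), G.degree v := by
        conv_rhs => rw [← B.biUnion_parts]
        exact (Finset.sum_biUnion B.disjoint).symm
      rw [h1]
      exact G.sum_degrees_eq_twice_card_edges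
    have hhand : ∑ b ∈ B.parts, (degSum G b : ℝ) = 2 * m := by
      rw [hmdef]
      exact_mod_cast hhandN
    set t : ℝ := η * (2 * m) with htdef
    have ht : 0 < t := by positivity
    have htv : t ≤ ∑ b ∈ B.parts, (degSum G b : ℝ) := by rw [hhand]; nlinarith
    obtain ⟨Q, hQf, hQb⟩ := grouping B.parts (fun b => (degSum G b : ℝ)) t
      (fun p _ => by positivity) ht htv
    have hgsub : ∀ g ∈ Q.parts, g ⊆ B.parts := fun g hg => Q.le hg
    have hgdisj : ∀ g ∈ Q.parts, (↑g : Set (Finset V)).PairwiseDisjoint id :=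
      fun g hg => B.disjoint.subset (Finset.coe_subset.2 (hgsub g hg))
    have hUdegN : ∀ g ∈ Q.parts, degSum G (g.biUnion id) = ∑ b ∈ g, degSum G b := by
      intro g hg
      simp only [degSum]
      exact Finset.sum_biUnion (hgdisj g hg)
    have hUdeg : ∀ g ∈ Q.parts, (degSum G (g.biUnion id) : ℝ) = ∑ b ∈ g, (degSum G b : ℝ) := by
      intro g hg
      rw [hUdegN g hg, Nat.cast_sum]
    have hUedge : ∀ g ∈ Q.parts, ∑ b ∈ g, intEdges G b ≤ intEdges G (g.biUnion id) := by
      intro g hg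
      have hdisjF : ∀ b ∈ g, ∀ b' ∈ g, b ≠ b' →
          Disjoint (G.edgeFinset.filter (fun e => ∀ v ∈ e, v ∈ b))
                   (G.edgeFinset.filter (fun e => ∀ v ∈ e, v ∈ b')) := by
        intro b hb b' hb' hne
        rw [Finset.disjoint_left]
        intro e he he'
        simp only [Finset.mem_filter] at he he'
        have hx := Sym2.out_fst_mem e
        exact hne (B.eq_of_mem_parts (hgsub g hg hb) (hgsub g hg hb')
          (he.2 _ hx) (he'.2 _ hx))
      calc ∑ b ∈ g, intEdges G b
          = (g.biUnion (fun b => G.edgeFinset.filter (fun e => ∀ v ∈ e, v ∈ b))).card := by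
            simp only [intEdges]
            exact (Finset.card_biUnion hdisjF).symm
        _ ≤ (G.edgeFinset.filter (fun e => ∀ v ∈ e, v ∈ g.biUnion id)).card := by
            apply Finset.card_le_card
            intro e he
            simp only [Finset.mem_biUnion, Finset.mem_filter] at he ⊢
            obtain ⟨b, hb, heE, hev⟩ := he
            exact ⟨heE, fun v hv => ⟨b, hb, hev v hv⟩⟩
        _ = intEdges G (g.biUnion id) := rfl
    have hinj : ∀ g ∈ Q.parts, ∀ h ∈ Q.parts, g.biUnion id = h.biUnion id → g = h := by
      intro g hg h hh he
      by_contra hne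
      obtain ⟨b, hb⟩ := Q.nonempty_of_mem_parts hg
      obtain ⟨x, hx⟩ := B.nonempty_of_mem_parts (hgsub g hg hb)
      have hxg : x ∈ g.biUnion id := Finset.mem_biUnion.2 ⟨b, hb, hx⟩
      rw [he] at hxg
      obtain ⟨b', hb', hx'⟩ := Finset.mem_biUnion.1 hxg
      have hbb : b = b' := B.eq_of_mem_parts (hgsub g hg hb) (hgsub h hh hb') hx hx'
      subst hbb
      exact (Finset.disjoint_left.1 (Q.disjoint hg hh hne) hb) hb'
    have hAdisj : ∀ g ∈ Q.parts, ∀ h ∈ Q.parts, g ≠ h →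
        Disjoint (g.biUnion id) (h.biUnion id) := by
      intro g hg h hh hne
      rw [Finset.disjoint_left]
      intro x hxg hxh
      obtain ⟨b, hb, hxb⟩ := Finset.mem_biUnion.1 hxg
      obtain ⟨b', hb', hxb'⟩ := Finset.mem_biUnion.1 hxh
      have hbb : b = b' := B.eq_of_mem_parts (hgsub g hg hb) (hgsub h hh hb') hxb hxb'
      subst hbb
      exact (Finset.disjoint_left.1 (Q.disjoint hg hh hne) hb) hb'
    refine ⟨⟨Q.parts.image (fun g => g.biUnion id), ?_, ?_, ?_⟩, ?_, ?_, ?_⟩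
    · rw [Finset.supIndep_iff_pairwiseDisjoint]
      intro u hu v hv huv
      simp only [coe_image, Set.mem_image, mem_coe] at hu hv
      obtain ⟨g, hg, rfl⟩ := hu
      obtain ⟨h, hh, rfl⟩ := hv
      exact hAdisj g hg h hh (fun e => huv (by rw [e]))
    · rw [Finset.sup_image]
      ext x
      simp only [Finset.mem_sup, Function.comp_apply, id_eq]
      constructor
      · intro _; exact Finset.mem_univ x
      · intro _
        obtain ⟨b, hbB, hxb⟩ := B.exists_mem (Finset.mem_univ x)
        have hbQ : b ∈ Q.parts.biUnion id := by rw [Q.biUnion_parts]; exact hbB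
        obtain ⟨g, hg, hbg⟩ := Finset.mem_biUnion.1 hbQ
        exact ⟨g, hg, Finset.mem_biUnion.2 ⟨b, hbg, hxb⟩⟩
    · intro hbot
      simp only [Finset.mem_image] at hbot
      obtain ⟨g, hg, hbe⟩ := hbot
      obtain ⟨b, hb⟩ := Q.nonempty_of_mem_parts hg
      obtain ⟨x, hx⟩ := B.nonempty_of_mem_parts (hgsub g hg hb)
      have hxU : x ∈ g.biUnion id := Finset.mem_biUnion.2 ⟨b, hb, hx⟩
      rw [hbe] at hxU
      exact absurd hxU (Finset.notMem_empty x)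
    · -- B ≤ A
      intro b hb
      have hbQ : b ∈ Q.parts.biUnion id := by rw [Q.biUnion_parts]; exact hb
      obtain ⟨g, hg, hbg⟩ := Finset.mem_biUnion.1 hbQ
      exact ⟨g.biUnion id, Finset.mem_image_of_mem _ hg,
        Finset.subset_biUnion_of_mem id hbg⟩
    · -- fatness
      intro s hs
      simp only [Finset.mem_image] at hs
      obtain ⟨g, hg, rfl⟩ := hs
      have h1 := hQf g hg
      rw [hUdeg g hg]
      calc η * (2 * m) = t := htdef.symm
        _ ≤ ∑ b ∈ g, (degSum G b : ℝ) := h1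
    · -- score
      have hsumE : ∑ u ∈ Q.parts.image (fun g => g.biUnion id), (intEdges G u : ℝ)
          = ∑ g ∈ Q.parts, (intEdges G (g.biUnion id) : ℝ) := Finset.sum_image hinj
      have hsumD : ∑ u ∈ Q.parts.image (fun g => g.biUnion id), ((degSum G u : ℝ)) ^ 2
          = ∑ g ∈ Q.parts, ((degSum G (g.biUnion id) : ℝ)) ^ 2 := Finset.sum_image hinj
      have hE : ∑ b ∈ B.parts, (intEdges G b : ℝ)
          ≤ ∑ g ∈ Q.parts, (intEdges G (g.biUnion id) : ℝ) := by
        have h1 : ∑ b ∈ B.parts, intEdges G b = ∑ g ∈ Q.parts, ∑ b ∈ g, intEdges G b := by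
          conv_lhs => rw [← Q.biUnion_parts]
          exact Finset.sum_biUnion Q.disjoint
        have h2 : ∑ g ∈ Q.parts, ∑ b ∈ g, intEdges G b
            ≤ ∑ g ∈ Q.parts, intEdges G (g.biUnion id) := Finset.sum_le_sum hUedge
        exact_mod_cast h1 ▸ h2
      have hDval : ∀ g ∈ Q.parts, ((degSum G (g.biUnion id) : ℝ)) ^ 2
          = (∑ b ∈ g, (degSum G b : ℝ)) ^ 2 := fun g hg => by rw [hUdeg g hg]
      have hD : ∑ g ∈ Q.parts, ((degSum G (g.biUnion id) : ℝ)) ^ 2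
          < 8 * η * m ^ 2 + ∑ b ∈ B.parts, (degSum G b : ℝ) ^ 2 := by
        rw [Finset.sum_congr rfl hDval]
        have := hQb
        rw [hhand] at this
        calc ∑ g ∈ Q.parts, (∑ b ∈ g, (degSum G b : ℝ)) ^ 2
            < 2 * t * (2 * m) + ∑ b ∈ B.parts, (degSum G b : ℝ) ^ 2 := this
          _ = 8 * η * m ^ 2 + ∑ b ∈ B.parts, (degSum G b : ℝ) ^ 2 := by
              rw [htdef]; ring
      simp only [modScore, if_neg hmne]
      rw [hsumE, hsumD]
      set x := ∑ b ∈ B.parts, (intEdges G b : ℝ)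
      set y := ∑ g ∈ Q.parts, (intEdges G (g.biUnion id) : ℝ)
      set p := ∑ b ∈ B.parts, (degSum G b : ℝ) ^ 2
      set q := ∑ g ∈ Q.parts, ((degSum G (g.biUnion id) : ℝ)) ^ 2
      have h4 : (0:ℝ) < 4 * m ^ 2 := by positivity
      have hxy : x / m ≤ y / m := by gcongr
      have hq : (q - p) / (4 * m ^ 2) < 2 * η := by
        rw [div_lt_iff₀ h4]
        nlinarith
      rw [sub_div] at hq
      linarith
  have hne : Nonempty (Finpartition (univ : Finset V)) := ⟨⊤⟩
  obtain ⟨P₀, hP₀⟩ := Finite.exists_max (fun P : Finpartition (univ : Finset V) => modScore G P)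
  obtain ⟨A, _, hfat, hsc⟩ := main P₀
  refine ⟨main, A, hfat, ?_⟩
  have hle : modularity G ≤ modScore G P₀ := ciSup_le hP₀
  linarith
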